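/- Let n be an even natural number with n ≥ 1 and let p₁ ≤ p₂ ≤ … ≤ pₙ and q₁ ≤ q₂ ≤ … ≤ qₙ be positive real numbers such that ∑_{j=1}^n p_j = ∑_{j=1}^n q_j and, for every k with 2 ≤ k ≤ n, ∑_{j=k}^n p_j ≤ ∑_{j=k}^n q_j. Then for every real x with 0 < x < 1, one has (∏_{j=1}^n q_j)·∏_{j=1}^n (x^{p_j} - 1) ≤ (∏_{j=1}^n p_j)·∏_{j=1}^n (x^{q_j} - 1). -/

import Mathlib

open Real Set

noncomputable def gfun (c t : ℝ) : ℝ := Real.log (1 - Real.exp (c * t)) - Real.log t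
noncomputable def gder (c t : ℝ) : ℝ :=
  -(c * Real.exp (c * t)) / (1 - Real.exp (c * t)) - 1 / t
noncomputable def gder2 (c t : ℝ) : ℝ :=
  -(c ^ 2 * Real.exp (c * t)) / (1 - Real.exp (c * t)) ^ 2 + 1 / t ^ 2

lemma exp_lt_one' {c t : ℝ} (hc : c < 0) (ht : 0 < t) : Real.exp (c * t) < 1 := by
  rw [Real.exp_lt_one_iff]; exact mul_neg_of_neg_of_pos hc ht

lemma hasDerivAt_gfun {c t : ℝ} (hc : c < 0) (ht : 0 < t) :
    HasDerivAt (gfun c) (gder c t) t := by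
  have hE : Real.exp (c * t) < 1 := exp_lt_one' hc ht
  have h1 : HasDerivAt (fun s : ℝ => c * s) c t := by
    simpa using (hasDerivAt_id t).const_mul c
  have h2 : HasDerivAt (fun s : ℝ => Real.exp (c * s)) (Real.exp (c * t) * c) t := h1.exp
  have h3 : HasDerivAt (fun s : ℝ => 1 - Real.exp (c * s)) (-(Real.exp (c * t) * c)) t := by
    exact h2.const_sub 1
  have h4 : HasDerivAt (fun s : ℝ => Real.log (1 - Real.exp (c * s)))
      (-(Real.exp (c * t) * c) / (1 - Real.exp (c * t))) t :=
    h3.log (by linarith)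
  have h5 : HasDerivAt Real.log t⁻¹ t := Real.hasDerivAt_log ht.ne'
  have := h4.sub h5
  convert this using 1
  all_goals try rfl
  unfold gder
  rw [one_div]
  ring_nf

lemma hasDerivAt_gder {c t : ℝ} (hc : c < 0) (ht : 0 < t) :
    HasDerivAt (gder c) (gder2 c t) t := by
  have hE : Real.exp (c * t) < 1 := exp_lt_one' hc ht
  have h1 : HasDerivAt (fun s : ℝ => c * s) c t := by
    simpa using (hasDerivAt_id t).const_mul c
  have h2 : HasDerivAt (fun s : ℝ => Real.exp (c * s)) (Real.exp (c * t) * c) t := h1.exp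
  have hnum : HasDerivAt (fun s : ℝ => -(c * Real.exp (c * s)))
      (-(c * (Real.exp (c * t) * c))) t := by
    exact (h2.const_mul c).neg
  have hden : HasDerivAt (fun s : ℝ => 1 - Real.exp (c * s)) (-(Real.exp (c * t) * c)) t := by
    exact h2.const_sub 1
  have hq := hnum.div hden (by linarith)
  have hinv : HasDerivAt (fun s : ℝ => 1 / s) (-(1 / t ^ 2)) t := by
    simpa [one_div] using (hasDerivAt_inv ht.ne')
  have := hq.sub hinv
  convert this using 1
  all_goals try rfl
  unfold gder2
  field_simp
  ring

lemma gder2_nonneg {c t : ℝ} (hc : c < 0) (ht : 0 < t) : 0 ≤ gder2 c t := by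
  have hE : Real.exp (c * t) < 1 := exp_lt_one' hc ht
  set u : ℝ := -(c * t) with hu
  have hu0 : 0 < u := by have := mul_neg_of_neg_of_pos hc ht; simp [hu]; linarith
  have hsinh : u / 2 < Real.sinh (u / 2) := Real.self_lt_sinh_iff.2 (by linarith)
  have hsinheq : Real.sinh (u / 2) = (Real.exp (u / 2) - Real.exp (-(u / 2))) / 2 :=
    Real.sinh_eq _
  have key : u * Real.exp (-(u / 2)) ≤ 1 - Real.exp (-u) := by
    have h1 : u ≤ Real.exp (u / 2) - Real.exp (-(u / 2)) := by
      rw [hsinheq] at hsinh; linarith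
    have h2 := mul_le_mul_of_nonneg_right h1 (Real.exp_pos (-(u / 2))).le
    calc u * Real.exp (-(u / 2)) ≤ (Real.exp (u / 2) - Real.exp (-(u / 2))) * Real.exp (-(u / 2)) := h2
      _ = 1 - Real.exp (-u) := by
          rw [sub_mul, ← Real.exp_add, ← Real.exp_add]
          norm_num
          rw [show -(u/2) + -(u/2) = -u by ring]
  have hsq : u ^ 2 * Real.exp (-u) ≤ (1 - Real.exp (-u)) ^ 2 := by
    have hnn : 0 ≤ u * Real.exp (-(u / 2)) := by positivity
    have := mul_self_le_mul_self hnn key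
    calc u ^ 2 * Real.exp (-u) = (u * Real.exp (-(u / 2))) * (u * Real.exp (-(u / 2))) := by
          rw [show (-u) = -(u/2) + -(u/2) by ring, Real.exp_add]; ring
      _ ≤ (1 - Real.exp (-u)) * (1 - Real.exp (-u)) := this
      _ = (1 - Real.exp (-u)) ^ 2 := by ring
  have hEu : Real.exp (c * t) = Real.exp (-u) := by rw [hu]; ring_nf
  have h1E : (0:ℝ) < 1 - Real.exp (-u) := by rw [← hEu]; linarith
  have hmain : c ^ 2 * Real.exp (c * t) / (1 - Real.exp (c * t)) ^ 2 ≤ 1 / t ^ 2 := by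
    rw [hEu, div_le_div_iff₀ (by positivity) (by positivity)]
    have hu2 : u ^ 2 = c ^ 2 * t ^ 2 := by rw [hu]; ring
    nlinarith [hsq]
  unfold gder2
  have : -(c ^ 2 * Real.exp (c * t)) / (1 - Real.exp (c * t)) ^ 2
      = -(c ^ 2 * Real.exp (c * t) / (1 - Real.exp (c * t)) ^ 2) := by ring
  rw [this]
  linarith

lemma gder_monoOn {c : ℝ} (hc : c < 0) : MonotoneOn (gder c) (Set.Ioi 0) := by
  apply monotoneOn_of_hasDerivWithinAt_nonneg (convex_Ioi (0:ℝ)) (f' := gder2 c)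
  · intro t ht
    exact (hasDerivAt_gder hc ht).continuousAt.continuousWithinAt
  · intro t ht
    rw [interior_Ioi] at ht
    exact (hasDerivAt_gder hc ht).hasDerivWithinAt
  · intro t ht
    rw [interior_Ioi] at ht
    exact gder2_nonneg hc ht

lemma gfun_tangent {c a b : ℝ} (hc : c < 0) (ha : 0 < a) (hb : 0 < b) :
    gfun c a + gder c a * (b - a) ≤ gfun c b := by
  rcases lt_trichotomy a b with hab | hab | hab
  · obtain ⟨z, hz, hz'⟩ := exists_hasDerivAt_eq_slope (gfun c) (gder c) hab
      (fun t ht => (hasDerivAt_gfun hc (lt_of_lt_of_le ha ht.1)).continuousAt.continuousWithinAt)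
      (fun t ht => hasDerivAt_gfun hc (lt_trans ha ht.1))
    have hmono : gder c a ≤ gder c z := gder_monoOn hc ha (lt_trans ha hz.1) hz.1.le
    have hba : 0 < b - a := by linarith
    have : gder c a * (b - a) ≤ gder c z * (b - a) :=
      mul_le_mul_of_nonneg_right hmono hba.le
    rw [hz'] at this
    rw [div_mul_cancel₀] at this
    · linarith
    · exact hba.ne'
  · simp [hab]
  · obtain ⟨z, hz, hz'⟩ := exists_hasDerivAt_eq_slope (gfun c) (gder c) hab
      (fun t ht => (hasDerivAt_gfun hc (lt_of_lt_of_le hb ht.1)).continuousAt.continuousWithinAt)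
      (fun t ht => hasDerivAt_gfun hc (lt_trans hb ht.1))
    have hmono : gder c z ≤ gder c a := gder_monoOn hc (lt_trans hb hz.1) ha hz.2.le
    have hab' : 0 < a - b := by linarith
    have : gder c z * (a - b) ≤ gder c a * (a - b) :=
      mul_le_mul_of_nonneg_right hmono hab'.le
    rw [hz'] at this
    rw [div_mul_cancel₀] at this
    · linarith
    · exact hab'.ne'

lemma abel_identity (C T : ℕ → ℝ) :
    ∀ m : ℕ, 1 ≤ m → ∑ j ∈ Finset.range m, C j * (T j - T (j + 1))
      = (∑ j ∈ Finset.range m, (C j - C (j - 1)) * T j) + C 0 * T 0 - C (m - 1) * T m := by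
  intro m
  induction m with
  | zero => intro h; omega
  | succ k ih =>
    intro _
    rcases Nat.eq_zero_or_pos k with hk | hk
    · subst hk; simp [Finset.sum_range_succ]; ring
    · rw [Finset.sum_range_succ, Finset.sum_range_succ, ih hk]
      have h1 : k + 1 - 1 = k := by omega
      rw [h1]
      ring

lemma abel_nonneg (n : ℕ) (C T : ℕ → ℝ)
    (hC : ∀ k, 1 ≤ k → k < n → C (k - 1) ≤ C k)
    (hT0 : T 0 = 0) (hTn : T n = 0) (hT : ∀ k, 0 ≤ T k) :
    0 ≤ ∑ j ∈ Finset.range n, C j * (T j - T (j + 1)) := by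
  rcases Nat.eq_zero_or_pos n with hn | hn
  · subst hn; simp
  rw [abel_identity C T n hn, hT0, hTn]
  have : 0 ≤ ∑ j ∈ Finset.range n, (C j - C (j - 1)) * T j := by
    apply Finset.sum_nonneg
    intro j hj
    rw [Finset.mem_range] at hj
    rcases Nat.eq_zero_or_pos j with hj0 | hj0
    · subst hj0; simp
    · exact mul_nonneg (by linarith [hC j hj0 hj]) (hT j)
  linarith

lemma fin_total_sum {n : ℕ} (f : Fin n → ℝ) :
    ∑ j ∈ Finset.range n, (if h : j < n then f ⟨j, h⟩ else 0) = ∑ j, f j := by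
  rw [← Fin.sum_univ_eq_sum_range (fun k => if h : k < n then f ⟨k, h⟩ else 0) n]
  apply Finset.sum_congr rfl
  intro j _
  rw [dif_pos j.isLt]

lemma fin_tail_sum {n : ℕ} (f : Fin n → ℝ) (m : ℕ) (hm : m < n) :
    ∑ j ∈ Finset.Ico m n, (if h : j < n then f ⟨j, h⟩ else 0)
      = ∑ j ∈ Finset.Ici (⟨m, hm⟩ : Fin n), f j := by
  have h1 : Finset.Ico m n = (Finset.range n).filter (fun j => m ≤ j) := by
    ext j; simp [Finset.mem_Ico, Finset.mem_range]; omega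
  have h2 : Finset.Ici (⟨m, hm⟩ : Fin n)
      = Finset.univ.filter (fun j : Fin n => m ≤ (j : ℕ)) := by
    ext j; simp [Finset.mem_Ici, Fin.le_def]
  rw [h1, h2, Finset.sum_filter, Finset.sum_filter,
    ← Fin.sum_univ_eq_sum_range
      (fun k => if m ≤ k then (if h : k < n then f ⟨k, h⟩ else 0) else 0) n]
  apply Finset.sum_congr rfl
  intro j _
  rw [dif_pos j.isLt]

theorem stmt_4 (n : ℕ) (hn : 1 ≤ n) (heven : Even n) (p q : Fin n → ℝ)
    (hpmono : Monotone p) (hqmono : Monotone q)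
    (hppos : ∀ j, 0 < p j) (hqpos : ∀ j, 0 < q j)
    (hsum : ∑ j, p j = ∑ j, q j)
    (htail : ∀ k : Fin n, 1 ≤ (k : ℕ) →
      ∑ j ∈ Finset.Ici k, p j ≤ ∑ j ∈ Finset.Ici k, q j)
    (x : ℝ) (hx0 : 0 < x) (hx1 : x < 1) :
    (∏ j, q j) * ∏ j, (x ^ p j - 1) ≤ (∏ j, p j) * ∏ j, (x ^ q j - 1) := by
  set c : ℝ := Real.log x with hc_def
  have hc : c < 0 := Real.log_neg hx0 hx1
  -- Karamata step
  set C : ℕ → ℝ := fun k => if h : k < n then gder c (p ⟨k, h⟩) else 0 with hC_def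
  set D : ℕ → ℝ := fun k => if h : k < n then q ⟨k, h⟩ - p ⟨k, h⟩ else 0 with hD_def
  set T : ℕ → ℝ := fun k => ∑ j ∈ Finset.Ico k n, D j with hT_def
  have hT0 : T 0 = 0 := by
    have : T 0 = ∑ j, (q j - p j) := by
      rw [hT_def]
      simp only
      rw [show Finset.Ico 0 n = Finset.range n by rw [Finset.range_eq_Ico]]
      simp only [hD_def]
      exact fin_total_sum (fun j => q j - p j)
    rw [this, Finset.sum_sub_distrib, hsum, sub_self]
  have hTn : T n = 0 := by rw [hT_def]; simp
  have hTk : ∀ k, 0 ≤ T k := by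
    intro k
    rcases Nat.eq_zero_or_pos k with h0 | h1
    · subst h0; rw [hT0]
    rcases lt_or_ge k n with hkn | hkn
    · have : T k = ∑ j ∈ Finset.Ici (⟨k, hkn⟩ : Fin n), (q j - p j) := by
        rw [hT_def]
        simp only [hD_def]
        exact fin_tail_sum (fun j => q j - p j) k hkn
      rw [this, Finset.sum_sub_distrib, sub_nonneg]
      exact htail ⟨k, hkn⟩ h1
    · rw [hT_def]; simp only
      rw [Finset.Ico_eq_empty (by omega)]; simp
  have hDT : ∀ j < n, D j = T j - T (j + 1) := by
    intro j hj
    rw [hT_def]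
    simp only
    rw [Finset.sum_eq_sum_Ico_succ_bot hj]
    ring
  have hCmono : ∀ k, 1 ≤ k → k < n → C (k - 1) ≤ C k := by
    intro k h1 h2
    rw [hC_def]
    simp only
    rw [dif_pos (show k - 1 < n by omega), dif_pos h2]
    exact gder_monoOn hc (hppos _) (hppos _)
      (hpmono (show (⟨k - 1, by omega⟩ : Fin n) ≤ ⟨k, h2⟩ by
        rw [Fin.mk_le_mk]; omega))
  have habel : 0 ≤ ∑ j ∈ Finset.range n, C j * (T j - T (j + 1)) :=
    abel_nonneg n C T hCmono hT0 hTn hTk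
  have hstep : ∑ j ∈ Finset.range n, C j * (T j - T (j + 1))
      = ∑ j : Fin n, gder c (p j) * (q j - p j) := by
    rw [← Fin.sum_univ_eq_sum_range (fun k => C k * (T k - T (k + 1))) n]
    apply Finset.sum_congr rfl
    intro j _
    rw [← hDT j j.isLt, hC_def, hD_def]
    simp only
    rw [dif_pos j.isLt, dif_pos j.isLt]
  have hkaramata : ∑ j, gfun c (p j) ≤ ∑ j, gfun c (q j) := by
    have htan : ∀ j : Fin n,
        gfun c (p j) + gder c (p j) * (q j - p j) ≤ gfun c (q j) :=
      fun j => gfun_tangent hc (hppos j) (hqpos j)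
    have hsum2 : ∑ j, (gfun c (p j) + gder c (p j) * (q j - p j)) ≤ ∑ j, gfun c (q j) :=
      Finset.sum_le_sum fun j _ => htan j
    rw [Finset.sum_add_distrib] at hsum2
    rw [hstep] at habel
    linarith
  -- exponentiate
  have hxp1 : ∀ t : ℝ, 0 < t → x ^ t < 1 := fun t ht => Real.rpow_lt_one hx0.le hx1 ht
  have hexp : ∀ t : ℝ, 0 < t → Real.exp (gfun c t) = (1 - x ^ t) / t := by
    intro t ht
    have hxt : x ^ t = Real.exp (c * t) := by
      rw [Real.rpow_def_of_pos hx0, hc_def]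
    have h1 : (0:ℝ) < 1 - Real.exp (c * t) := by
      have := exp_lt_one' hc ht; linarith
    rw [gfun, Real.exp_sub, Real.exp_log h1, Real.exp_log ht, hxt]
  have hprod : ∏ j, ((1 - x ^ p j) / p j) ≤ ∏ j, ((1 - x ^ q j) / q j) := by
    have := Real.exp_le_exp.2 hkaramata
    rw [Real.exp_sum, Real.exp_sum] at this
    calc ∏ j, ((1 - x ^ p j) / p j) = ∏ j, Real.exp (gfun c (p j)) := by
          apply Finset.prod_congr rfl; intro j _; rw [hexp _ (hppos j)]
      _ ≤ ∏ j, Real.exp (gfun c (q j)) := this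
      _ = ∏ j, ((1 - x ^ q j) / q j) := by
          apply Finset.prod_congr rfl; intro j _; rw [hexp _ (hqpos j)]
  -- algebra
  have hPA : (0:ℝ) < ∏ j, (1 - x ^ p j) :=
    Finset.prod_pos fun j _ => by have := hxp1 _ (hppos j); linarith
  have hQA : (0:ℝ) < ∏ j, (1 - x ^ q j) :=
    Finset.prod_pos fun j _ => by have := hxp1 _ (hqpos j); linarith
  have hPB : (0:ℝ) < ∏ j, p j := Finset.prod_pos fun j _ => hppos j
  have hQB : (0:ℝ) < ∏ j, q j := Finset.prod_pos fun j _ => hqpos j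
  rw [Finset.prod_div_distrib, Finset.prod_div_distrib] at hprod
  have hmain : (∏ j, (1 - x ^ p j)) * ∏ j, q j ≤ (∏ j, (1 - x ^ q j)) * ∏ j, p j :=
    (div_le_div_iff₀ hPB hQB).1 hprod
  have hflipp : ∏ j, (x ^ p j - 1) = ∏ j, (1 - x ^ p j) := by
    calc ∏ j, (x ^ p j - 1) = ∏ j, -(1 - x ^ p j) := by
          apply Finset.prod_congr rfl; intro j _; ring
      _ = ∏ j, (-1 : ℝ) * (1 - x ^ p j) := by
          apply Finset.prod_congr rfl; intro j _; ring
      _ = (-1) ^ n * ∏ j, (1 - x ^ p j) := by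
          rw [Finset.prod_mul_distrib, Finset.prod_const, Finset.card_univ, Fintype.card_fin]
      _ = ∏ j, (1 - x ^ p j) := by rw [heven.neg_one_pow, one_mul]
  have hflipq : ∏ j, (x ^ q j - 1) = ∏ j, (1 - x ^ q j) := by
    calc ∏ j, (x ^ q j - 1) = ∏ j, -(1 - x ^ q j) := by
          apply Finset.prod_congr rfl; intro j _; ring
      _ = ∏ j, (-1 : ℝ) * (1 - x ^ q j) := by
          apply Finset.prod_congr rfl; intro j _; ring
      _ = (-1) ^ n * ∏ j, (1 - x ^ q j) := by
          rw [Finset.prod_mul_distrib, Finset.prod_const, Finset.card_univ, Fintype.card_fin]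
      _ = ∏ j, (1 - x ^ q j) := by rw [heven.neg_one_pow, one_mul]
  rw [hflipp, hflipq]
  linarith
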